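/- Suppose there is a constant α > 0 such that ‖u ⊛ v‖₂ ≥ α‖u‖₂‖v‖₂ for all conjugate-symmetrized zero-padded vectors u = S(x₁ − x₂), v = S(x₁ + x₂) arising from x₁, x₂ in the admissible signal class X ⊂ ℂⁿ (with S the zero-padding-and-symmetrization map into ℂ^N and ⊛ circular convolution on ℂ^N). Then for all x₁, x₂ ∈ X: ‖ |F S(x₁)|² − |F S(x₂)|² ‖₂ ≥ (α/√N)·‖S(x₁ − x₂)‖₂·‖S(x₁ + x₂)‖₂, where F is the unitary DFT on ℂ^N. -/

import Mathlib

open scoped ComplexConjugate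

/-- Circular convolution on `ℂ^N` (indexed by `ZMod N`). -/
noncomputable def cconv (N : ℕ) [NeZero N] (x y : ZMod N → ℂ) : ZMod N → ℂ :=
  fun k => ∑ i : ZMod N, x i * y (k - i)

/-- ℓ² norm on `ℂ^N`. -/
noncomputable def l2Z (N : ℕ) [NeZero N] (z : ZMod N → ℂ) : ℝ :=
  Real.sqrt (∑ k : ZMod N, ‖z k‖ ^ 2)

/-- Unitary DFT: `(Fx)_k = N^{-1/2} ∑_l e^{i2πkl/N} x_l`. -/
noncomputable def udft (N : ℕ) [NeZero N] (x : ZMod N → ℂ) : ZMod N → ℂ :=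
  fun k => (Real.sqrt N : ℂ)⁻¹ *
    ∑ l : ZMod N, Complex.exp (Complex.I * 2 * Real.pi * ((k.val : ℂ) * (l.val : ℂ)) / N) * x l

noncomputable def eZ (N : ℕ) [NeZero N] (a : ZMod N) : ℂ :=
  Complex.exp (Complex.I * 2 * Real.pi * a.val / N)

lemma eZ_natCast (N : ℕ) [NeZero N] (m : ℕ) :
    Complex.exp (Complex.I * 2 * Real.pi * m / N) = eZ N (m : ZMod N) := by
  have hN : (N : ℂ) ≠ 0 := Nat.cast_ne_zero.mpr (NeZero.ne N)
  rw [eZ, ZMod.val_natCast]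
  conv_lhs => rw [← Nat.div_add_mod m N]
  push_cast
  rw [show Complex.I * 2 * ↑Real.pi * (↑N * ↑(m / N) + ↑(m % N)) / ↑N
      = ((m / N : ℕ) : ℂ) * (2 * Real.pi * Complex.I) + Complex.I * 2 * Real.pi * ↑(m % N) / ↑N by
    field_simp]
  rw [Complex.exp_add]
  have h1 : Complex.exp (((m / N : ℕ) : ℂ) * (2 * Real.pi * Complex.I)) = 1 := by
    exact_mod_cast Complex.exp_int_mul_two_pi_mul_I ((m / N : ℕ) : ℤ)
  rw [h1, one_mul]

lemma eZ_add (N : ℕ) [NeZero N] (a b : ZMod N) : eZ N (a + b) = eZ N a * eZ N b := by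
  have h : (a + b : ZMod N) = ((a.val + b.val : ℕ) : ZMod N) := by
    push_cast [ZMod.natCast_val, ZMod.cast_id]
    ring
  rw [h, ← eZ_natCast]
  push_cast
  rw [eZ, eZ, ← Complex.exp_add]
  congr 1
  field_simp

@[simp] lemma eZ_zero (N : ℕ) [NeZero N] : eZ N 0 = 1 := by
  simp [eZ, ZMod.val_zero]

lemma eZ_abs (N : ℕ) [NeZero N] (a : ZMod N) : ‖eZ N a‖ = 1 := by
  have h : Complex.I * 2 * Real.pi * (a.val : ℂ) / N
      = ((2 * Real.pi * a.val / N : ℝ) : ℂ) * Complex.I := by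
    push_cast; ring
  rw [eZ, h, Complex.norm_exp_ofReal_mul_I]

lemma eZ_ne_zero (N : ℕ) [NeZero N] (a : ZMod N) : eZ N a ≠ 0 := Complex.exp_ne_zero _

lemma eZ_conj (N : ℕ) [NeZero N] (a : ZMod N) : conj (eZ N a) = eZ N (-a) := by
  have h1 : eZ N a * eZ N (-a) = 1 := by rw [← eZ_add]; simp
  have h2 : eZ N a * conj (eZ N a) = 1 := by
    rw [Complex.mul_conj, Complex.normSq_eq_norm_sq, eZ_abs]; norm_num
  rw [← inv_eq_of_mul_eq_one_right h2, inv_eq_of_mul_eq_one_right h1]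

lemma eZ_mul_pow (N : ℕ) [NeZero N] (a l : ZMod N) : eZ N (a * l) = eZ N a ^ l.val := by
  have h : (a * l : ZMod N) = ((a.val * l.val : ℕ) : ZMod N) := by
    push_cast [ZMod.natCast_val, ZMod.cast_id]; ring
  rw [h, ← eZ_natCast, eZ]
  rw [← Complex.exp_nat_mul]
  congr 1
  push_cast
  field_simp

lemma val_natCast_eq_self (N : ℕ) [NeZero N] (a : ZMod N) : ((a.val : ZMod N)) = a := by
  have := ZMod.natCast_val (R := ZMod N) a
  rwa [ZMod.cast_id] at this

lemma eZ_ne_one (N : ℕ) [NeZero N] {a : ZMod N} (ha : a ≠ 0) : eZ N a ≠ 1 := by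
  intro h
  rw [eZ, Complex.exp_eq_one_iff] at h
  obtain ⟨m, hm⟩ := h
  have hN : (N : ℂ) ≠ 0 := Nat.cast_ne_zero.mpr (NeZero.ne N)
  have hc : (a.val : ℂ) = (m : ℂ) * N := by
    rw [div_eq_iff hN] at hm
    have hc0 : Complex.I * 2 * (Real.pi : ℂ) ≠ 0 := by
      simp [Real.pi_ne_zero, Complex.I_ne_zero]
    apply mul_left_cancel₀ hc0
    linear_combination hm
  have hval : (a.val : ℝ) = m * N := by exact_mod_cast hc
  have h1 : 0 < a.val := Nat.pos_of_ne_zero (fun h0 => ha (by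
    rw [← val_natCast_eq_self N a, h0, Nat.cast_zero]))
  have h2 : a.val < N := ZMod.val_lt a
  have hNpos : (0:ℝ) < N := by exact_mod_cast Nat.pos_of_ne_zero (NeZero.ne N)
  have hm0 : (0:ℝ) < m * N := by rw [← hval]; exact_mod_cast h1
  have hm1 : (m:ℝ) * N < 1 * N := by rw [← hval, one_mul]; exact_mod_cast h2
  have hmp : (0:ℝ) < m := by nlinarith
  have hml : (m:ℝ) < 1 := by nlinarith
  have : (0:ℤ) < m := by exact_mod_cast hmp
  have : (m:ℤ) < 1 := by exact_mod_cast hml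
  omega

lemma sum_eZ_mul (N : ℕ) [NeZero N] (a : ZMod N) :
    ∑ l : ZMod N, eZ N (a * l) = if a = 0 then (N : ℂ) else 0 := by
  split_ifs with h
  · simp [h, Finset.card_univ]
  · simp only [eZ_mul_pow]
    have hsum : ∑ l : ZMod N, eZ N a ^ l.val = ∑ j ∈ Finset.range N, eZ N a ^ j :=
      Finset.sum_nbij' (fun l : ZMod N => l.val) (fun m : ℕ => (m : ZMod N))
        (fun l _ => Finset.mem_range.mpr l.val_lt) (fun m _ => Finset.mem_univ _)
        (fun l _ => val_natCast_eq_self N l)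
        (fun m hm => by simp [ZMod.val_natCast, Nat.mod_eq_of_lt (Finset.mem_range.mp hm)])
        (fun l _ => rfl)
    rw [hsum, geom_sum_eq (eZ_ne_one N h)]
    have hzN : eZ N a ^ N = 1 := by
      rw [eZ, ← Complex.exp_nat_mul]
      have hN : (N : ℂ) ≠ 0 := Nat.cast_ne_zero.mpr (NeZero.ne N)
      rw [show (N : ℂ) * (Complex.I * 2 * Real.pi * a.val / N) = (a.val : ℤ) * (2 * Real.pi * Complex.I) by
        push_cast; field_simp]
      exact Complex.exp_int_mul_two_pi_mul_I _
    rw [hzN, sub_self, zero_div]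

lemma udft_apply (N : ℕ) [NeZero N] (x : ZMod N → ℂ) (k : ZMod N) :
    udft N x k = (Real.sqrt N : ℂ)⁻¹ * ∑ l : ZMod N, eZ N (k * l) * x l := by
  unfold udft
  congr 1
  apply Finset.sum_congr rfl
  intro l _
  congr 1
  have h1 : ((k.val : ℂ) * (l.val : ℂ)) = ((k.val * l.val : ℕ) : ℂ) := by push_cast; ring
  rw [h1, eZ_natCast]
  congr 1
  push_cast [val_natCast_eq_self]
  ring

lemma sqrtN_ne_zero (N : ℕ) [NeZero N] : (Real.sqrt N : ℂ) ≠ 0 := by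
  have : (0:ℝ) < N := by exact_mod_cast Nat.pos_of_ne_zero (NeZero.ne N)
  simp only [ne_eq, Complex.ofReal_eq_zero]
  positivity

lemma sq_sqrtN (N : ℕ) [NeZero N] : (Real.sqrt N : ℂ) * (Real.sqrt N : ℂ) = (N : ℂ) := by
  have : (0:ℝ) ≤ N := by positivity
  rw [← Complex.ofReal_mul, ← Real.sqrt_mul_self this]
  norm_num

lemma udft_cconv (N : ℕ) [NeZero N] (u v : ZMod N → ℂ) (k : ZMod N) :
    udft N (cconv N u v) k = (Real.sqrt N : ℂ) * (udft N u k * udft N v k) := by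
  rw [udft_apply, udft_apply, udft_apply]
  have key : ∑ l : ZMod N, eZ N (k * l) * cconv N u v l
      = (∑ i : ZMod N, eZ N (k * i) * u i) * (∑ j : ZMod N, eZ N (k * j) * v j) := by
    rw [Finset.sum_mul_sum]
    unfold cconv
    simp_rw [Finset.mul_sum]
    rw [Finset.sum_comm]
    apply Finset.sum_congr rfl
    intro i _
    rw [Fintype.sum_equiv (Equiv.addLeft i).symm
      (fun l => eZ N (k * l) * (u i * v (l - i)))
      (fun j => eZ N (k * i) * u i * (eZ N (k * j) * v j)) ?_]
    intro l
    rw [Equiv.addLeft_symm]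
    simp only [Equiv.coe_addLeft]
    rw [show (-i + l : ZMod N) = l - i by ring,
      show k * l = k * i + k * (l - i) by ring, eZ_add]
    ring
  rw [key]
  have h := sqrtN_ne_zero N
  field_simp

lemma udft_plancherel (N : ℕ) [NeZero N] (x : ZMod N → ℂ) :
    ∑ k : ZMod N, ‖udft N x k‖ ^ 2 = ∑ k : ZMod N, ‖x k‖ ^ 2 := by
  have hC : ∑ k : ZMod N, udft N x k * conj (udft N x k)
      = ∑ k : ZMod N, x k * conj (x k) := by
    have hcc : conj ((Real.sqrt N : ℂ)⁻¹) = (Real.sqrt N : ℂ)⁻¹ := by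
      simp
    have hNc : (Real.sqrt N : ℂ)⁻¹ * (Real.sqrt N : ℂ)⁻¹ = (N : ℂ)⁻¹ := by
      rw [← mul_inv, sq_sqrtN]
    calc ∑ k : ZMod N, udft N x k * conj (udft N x k)
        = ∑ k : ZMod N, (N : ℂ)⁻¹ *
            ∑ l : ZMod N, ∑ m : ZMod N, eZ N (k * (l - m)) * (x l * conj (x m)) := by
          apply Finset.sum_congr rfl
          intro k _
          rw [udft_apply, map_mul, map_sum, hcc]
          rw [mul_mul_mul_comm, hNc]
          congr 1
          rw [Finset.sum_mul_sum]
          apply Finset.sum_congr rfl; intro l _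
          apply Finset.sum_congr rfl; intro m _
          rw [map_mul, eZ_conj, show -(k * m) = k * (-m) by ring,
            show k * (l - m) = k * l + k * (-m) by ring, eZ_add]
          ring
      _ = (N : ℂ)⁻¹ * ∑ l : ZMod N, ∑ m : ZMod N,
            (x l * conj (x m)) * ∑ k : ZMod N, eZ N ((l - m) * k) := by
          rw [← Finset.mul_sum, Finset.sum_comm]
          congr 1
          apply Finset.sum_congr rfl; intro l _
          rw [Finset.sum_comm]
          apply Finset.sum_congr rfl; intro m _
          rw [Finset.mul_sum]
          apply Finset.sum_congr rfl; intro k _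
          rw [mul_comm (l - m) k]
          ring
      _ = ∑ k : ZMod N, x k * conj (x k) := by
          simp_rw [sum_eZ_mul, sub_eq_zero, mul_ite, mul_zero]
          rw [Finset.mul_sum]
          apply Finset.sum_congr rfl
          intro l _
          rw [Finset.sum_ite_eq Finset.univ l (fun m => x l * conj (x m) * N)]
          have hN : (N : ℂ) ≠ 0 := Nat.cast_ne_zero.mpr (NeZero.ne N)
          simp only [Finset.mem_univ, if_true]
          field_simp
  have h1 : ∀ z : ℂ, z * conj z = ((‖z‖ ^ 2 : ℝ) : ℂ) := by
    intro z
    rw [Complex.mul_conj]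
    norm_cast
    rw [Complex.normSq_eq_norm_sq]
  simp_rw [h1] at hC
  rw [← Complex.ofReal_sum, ← Complex.ofReal_sum] at hC
  exact_mod_cast hC

lemma udft_real (N : ℕ) [NeZero N] (x : ZMod N → ℂ) (hx : ∀ k, x k = conj (x (-k)))
    (k : ZMod N) : conj (udft N x k) = udft N x k := by
  rw [udft_apply, map_mul, map_sum]
  congr 1
  · simp
  rw [Fintype.sum_equiv (Equiv.neg (ZMod N))
    (fun l => conj (eZ N (k * l) * x l))
    (fun l => eZ N (k * l) * x l) ?_]
  intro l
  simp only [Equiv.neg_apply]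
  rw [map_mul, eZ_conj, show -(k * l) = k * (-l) by ring]
  congr 1
  rw [hx l]
  simp

lemma udft_sub (N : ℕ) [NeZero N] (u v : ZMod N → ℂ) (k : ZMod N) :
    udft N (fun j => u j - v j) k = udft N u k - udft N v k := by
  unfold udft
  rw [← mul_sub, ← Finset.sum_sub_distrib]
  congr 1
  apply Finset.sum_congr rfl
  intro l _
  ring

/-- Stability of phase retrieval from symmetrized Fourier intensity
measurements: an RNMP lower bound `α` for the circular convolution of
symmetrized vectors yields
`‖|F S(x₁)|² − |F S(x₂)|²‖₂ ≥ (α/√N)·‖S(x₁−x₂)‖₂·‖S(x₁+x₂)‖₂`. -/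
theorem phase_retrieval_stability
    (n N : ℕ) [NeZero N] (S : (Fin n → ℂ) → ZMod N → ℂ) (X : Set (Fin n → ℂ))
    (α : ℝ) (hα : 0 < α)
    (hsym : ∀ x : Fin n → ℂ, ∀ k, S x k = conj (S x (-k)))
    (hbin : ∀ x₁ ∈ X, ∀ x₂ ∈ X,
      (fun k => cconv N (S x₁) (S x₁) k - cconv N (S x₂) (S x₂) k)
        = cconv N (S (x₁ - x₂)) (S (x₁ + x₂)))
    (hrnmp : ∀ x₁ ∈ X, ∀ x₂ ∈ X,
      α * l2Z N (S (x₁ - x₂)) * l2Z N (S (x₁ + x₂))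
        ≤ l2Z N (cconv N (S (x₁ - x₂)) (S (x₁ + x₂)))) :
    ∀ x₁ ∈ X, ∀ x₂ ∈ X,
      (α / Real.sqrt N) * l2Z N (S (x₁ - x₂)) * l2Z N (S (x₁ + x₂))
        ≤ Real.sqrt (∑ k : ZMod N,
            (‖udft N (S x₁) k‖ ^ 2 - ‖udft N (S x₂) k‖ ^ 2) ^ 2) := by
  intro x₁ h₁ x₂ h₂
  set w : ZMod N → ℂ := cconv N (S (x₁ - x₂)) (S (x₁ + x₂)) with hw
  have hNpos : (0:ℝ) < N := by exact_mod_cast Nat.pos_of_ne_zero (NeZero.ne N)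
  have hs : (0:ℝ) < Real.sqrt N := Real.sqrt_pos.mpr hNpos
  have hsc : (Real.sqrt N : ℂ) ≠ 0 := sqrtN_ne_zero N
  -- realness of the DFT of symmetrized vectors gives |F u|² = (F u)²
  have hsq : ∀ x : Fin n → ℂ, ∀ k,
      ((‖udft N (S x) k‖ ^ 2 : ℝ) : ℂ) = udft N (S x) k ^ 2 := by
    intro x k
    rw [show ((‖udft N (S x) k‖ ^ 2 : ℝ) : ℂ)
        = ((Complex.normSq (udft N (S x) k) : ℝ) : ℂ) by rw [Complex.sq_norm]]
    rw [← Complex.mul_conj, udft_real N (S x) (hsym x) k, sq]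
  -- the key pointwise identity
  have key : ∀ k : ZMod N,
      ((‖udft N (S x₁) k‖ ^ 2 - ‖udft N (S x₂) k‖ ^ 2 : ℝ) : ℂ)
        = (Real.sqrt N : ℂ)⁻¹ * udft N w k := by
    intro k
    have hb := hbin x₁ h₁ x₂ h₂
    have hud : udft N w k
        = udft N (cconv N (S x₁) (S x₁)) k - udft N (cconv N (S x₂) (S x₂)) k := by
      rw [hw, ← hb, udft_sub]
    rw [Complex.ofReal_sub, hsq x₁ k, hsq x₂ k, hud,
      udft_cconv, udft_cconv]
    field_simp
  -- the norm identity
  have hnorm : ∑ k : ZMod N,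
      (‖udft N (S x₁) k‖ ^ 2 - ‖udft N (S x₂) k‖ ^ 2) ^ 2
      = ((Real.sqrt N)⁻¹) ^ 2 * ∑ k : ZMod N, ‖w k‖ ^ 2 := by
    rw [← udft_plancherel N w, Finset.mul_sum]
    apply Finset.sum_congr rfl
    intro k _
    have hk := key k
    have : |‖udft N (S x₁) k‖ ^ 2 - ‖udft N (S x₂) k‖ ^ 2|
        = ‖(Real.sqrt N : ℂ)⁻¹ * udft N w k‖ := by
      rw [← hk, Complex.norm_real, Real.norm_eq_abs]
    calc (‖udft N (S x₁) k‖ ^ 2 - ‖udft N (S x₂) k‖ ^ 2) ^ 2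
        = |‖udft N (S x₁) k‖ ^ 2 - ‖udft N (S x₂) k‖ ^ 2| ^ 2 := by
          rw [sq_abs]
      _ = ‖(Real.sqrt N : ℂ)⁻¹ * udft N w k‖ ^ 2 := by rw [this]
      _ = ((Real.sqrt N)⁻¹) ^ 2 * ‖udft N w k‖ ^ 2 := by
          rw [norm_mul, mul_pow, norm_inv, Complex.norm_real, Real.norm_eq_abs,
            abs_of_nonneg (Real.sqrt_nonneg _)]
  rw [hnorm, Real.sqrt_mul (by positivity), Real.sqrt_sq (by positivity)]
  have hr := hrnmp x₁ h₁ x₂ h₂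
  rw [l2Z] at hr
  calc α / Real.sqrt N * l2Z N (S (x₁ - x₂)) * l2Z N (S (x₁ + x₂))
      = (Real.sqrt N)⁻¹ * (α * l2Z N (S (x₁ - x₂)) * l2Z N (S (x₁ + x₂))) := by
        field_simp
    _ ≤ (Real.sqrt N)⁻¹ * Real.sqrt (∑ k : ZMod N, ‖w k‖ ^ 2) := by
        apply mul_le_mul_of_nonneg_left _ (by positivity)
        exact hr
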